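/- The system ℏα' = −βℏ/t₂, ℏβ' = −β(4γ+ℏ)/(2t₂), ℏγ' = (18t₂ − α²β² + 4αβ³ − 4β⁴ − 45β²δ)/(18t₂β), ℏδ' = 2(32αβγ − 100β²γ + 9αβℏ − 18β²ℏ)/(45t₂) implies, on any interval where t₂ ≠ 0, β ≠ 0, and α' ≠ 0, the single fourth-order ODE ℏ²(α⁽⁴⁾ + 2α⁽³⁾/t₂ − 4α''α⁽³⁾/α' − 3(α'')²/(t₂α') + 3(α'')³/(α')²) + 4α''/(t₂²α') + 12t₂(α')³α'' + 4α(α')²α'' + 4α(α')³/t₂ + 14(α')⁴ + 2/t₂³ = 0. -/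

import Mathlib

/-- The first-order system for `(α,β,γ,δ)` coming from the singularity reduction of
the Garnier system of type 5/2+3/2 implies, on any open set where `t₂ ≠ 0`, `β ≠ 0`
and `α' ≠ 0`, the single fourth-order ODE
`ℏ²(α⁽⁴⁾ + 2α⁽³⁾/t₂ − 4α''α⁽³⁾/α' − 3(α'')²/(t₂α') + 3(α'')³/(α')²)
  + 4α''/(t₂²α') + 12t₂(α')³α'' + 4α(α')²α'' + 4α(α')³/t₂ + 14(α')⁴ + 2/t₂³ = 0`. -/
theorem stmt15 (ℏ : ℂ) (hℏ : ℏ ≠ 0) (U : Set ℂ) (hU : IsOpen U) (h0 : (0 : ℂ) ∉ U)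
    (α β γ δ : ℂ → ℂ)
    (hα : DifferentiableOn ℂ α U) (hβd : DifferentiableOn ℂ β U)
    (hγ : DifferentiableOn ℂ γ U) (hδ : DifferentiableOn ℂ δ U)
    (hβ0 : ∀ t ∈ U, β t ≠ 0)
    (hα' : ∀ t ∈ U, deriv α t ≠ 0)
    (h1 : ∀ t ∈ U, ℏ * deriv α t = -β t * ℏ / t)
    (h2 : ∀ t ∈ U, ℏ * deriv β t = -β t * (4 * γ t + ℏ) / (2 * t))
    (h3 : ∀ t ∈ U, ℏ * deriv γ t =
      (18 * t - (α t) ^ 2 * (β t) ^ 2 + 4 * α t * (β t) ^ 3 - 4 * (β t) ^ 4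
        - 45 * (β t) ^ 2 * δ t) / (18 * t * β t))
    (h4 : ∀ t ∈ U, ℏ * deriv δ t =
      2 * (32 * α t * β t * γ t - 100 * (β t) ^ 2 * γ t + 9 * α t * β t * ℏ
        - 18 * (β t) ^ 2 * ℏ) / (45 * t)) :
    ∀ t ∈ U,
      ℏ ^ 2 * (iteratedDeriv 4 α t + 2 * iteratedDeriv 3 α t / t
        - 4 * iteratedDeriv 2 α t * iteratedDeriv 3 α t / deriv α t
        - 3 * (iteratedDeriv 2 α t) ^ 2 / (t * deriv α t)
        + 3 * (iteratedDeriv 2 α t) ^ 3 / (deriv α t) ^ 2)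
      + 4 * iteratedDeriv 2 α t / (t ^ 2 * deriv α t)
      + 12 * t * (deriv α t) ^ 3 * iteratedDeriv 2 α t
      + 4 * α t * (deriv α t) ^ 2 * iteratedDeriv 2 α t
      + 4 * α t * (deriv α t) ^ 3 / t
      + 14 * (deriv α t) ^ 4 + 2 / t ^ 3 = 0 := by
  have hs0 : ∀ s ∈ U, s ≠ 0 := fun s hs h => h0 (h ▸ hs)
  have dAa : ∀ s ∈ U, DifferentiableAt ℂ α s :=
    fun s hs => (hα s hs).differentiableAt (hU.mem_nhds hs)
  have dAb : ∀ s ∈ U, DifferentiableAt ℂ β s :=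
    fun s hs => (hβd s hs).differentiableAt (hU.mem_nhds hs)
  have dAc : ∀ s ∈ U, DifferentiableAt ℂ γ s :=
    fun s hs => (hγ s hs).differentiableAt (hU.mem_nhds hs)
  have dAd : ∀ s ∈ U, DifferentiableAt ℂ δ s :=
    fun s hs => (hδ s hs).differentiableAt (hU.mem_nhds hs)
  have dα : ∀ s ∈ U, deriv α s = -β s / s := by
    intro s hs
    apply mul_left_cancel₀ hℏ
    rw [h1 s hs]; ring
  have mα : ∀ s ∈ U, deriv α s * s = -β s := by
    intro s hs
    rw [dα s hs]
    exact div_mul_cancel₀ _ (hs0 s hs)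
  have mβ : ∀ s ∈ U, deriv β s * (2 * s * ℏ) = -β s * (4 * γ s + ℏ) := by
    intro s hs
    have h := h2 s hs
    rw [eq_div_iff (mul_ne_zero two_ne_zero (hs0 s hs))] at h
    linear_combination h
  have mγ : ∀ s ∈ U, deriv γ s * (18 * s * β s * ℏ) =
      18 * s - (α s) ^ 2 * (β s) ^ 2 + 4 * α s * (β s) ^ 3 - 4 * (β s) ^ 4
        - 45 * (β s) ^ 2 * δ s := by
    intro s hs
    have h := h3 s hs
    have hne : (18 : ℂ) * s * β s ≠ 0 :=
      mul_ne_zero (mul_ne_zero (by norm_num) (hs0 s hs)) (hβ0 s hs)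
    rw [eq_div_iff hne] at h
    linear_combination h
  have mδ : ∀ s ∈ U, deriv δ s * (45 * s * ℏ) =
      2 * (32 * α s * β s * γ s - 100 * (β s) ^ 2 * γ s + 9 * α s * β s * ℏ
        - 18 * (β s) ^ 2 * ℏ) := by
    intro s hs
    have h := h4 s hs
    have hne : (45 : ℂ) * s ≠ 0 := mul_ne_zero (by norm_num) (hs0 s hs)
    rw [eq_div_iff hne] at h
    linear_combination h
  have dβ : ∀ s ∈ U, deriv β s = -β s * (4 * γ s + ℏ) / (2 * s * ℏ) := by
    intro s hs
    rw [eq_div_iff (by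
      exact mul_ne_zero (mul_ne_zero two_ne_zero (hs0 s hs)) hℏ)]
    exact mβ s hs
  have E2 : ∀ s ∈ U, iteratedDeriv 2 α s = β s * (4 * γ s + 3 * ℏ) / (2 * ℏ * s ^ 2) := by
    intro s hs
    have h2it : iteratedDeriv 2 α = deriv (deriv α) := by
      rw [show (2 : ℕ) = 1 + 1 from rfl, iteratedDeriv_succ, iteratedDeriv_one]
    have hev : deriv α =ᶠ[nhds s] fun x => -β x / x := by
      filter_upwards [hU.mem_nhds hs] with x hx using dα x hx
    have hder := (((dAb s hs).hasDerivAt.neg).div (hasDerivAt_id s) (hs0 s hs)).deriv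
    have hder' : deriv (fun x => -β x / x) s = _ := hder
    rw [h2it, hev.deriv_eq, hder', dβ s hs]
    simp only [Pi.neg_apply, id_eq]
    field_simp [hℏ, hs0 s hs]
    ring
  have E3 : ∀ s ∈ U, iteratedDeriv 3 α s =
      (72 * s - 4 * (α s) ^ 2 * (β s) ^ 2 + 16 * α s * (β s) ^ 3 - 16 * (β s) ^ 4
        - 180 * (β s) ^ 2 * δ s - 144 * β s * (γ s) ^ 2 - 288 * β s * γ s * ℏ
        - 135 * β s * ℏ ^ 2) / (36 * s ^ 3 * ℏ ^ 2) := by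
    intro s hs
    have h3it : iteratedDeriv 3 α = deriv (iteratedDeriv 2 α) := by
      rw [show (3 : ℕ) = 2 + 1 from rfl, iteratedDeriv_succ]
    have hev : iteratedDeriv 2 α =ᶠ[nhds s]
        fun x => β x * (4 * γ x + 3 * ℏ) / (2 * ℏ * x ^ 2) := by
      filter_upwards [hU.mem_nhds hs] with x hx using E2 x hx
    have hnum := (dAb s hs).hasDerivAt.mul
      (((dAc s hs).hasDerivAt.const_mul (4 : ℂ)).add_const (3 * ℏ))
    have hden := (hasDerivAt_pow 2 s).const_mul (2 * ℏ)
    have hne : 2 * ℏ * s ^ 2 ≠ 0 :=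
      mul_ne_zero (mul_ne_zero two_ne_zero hℏ) (pow_ne_zero 2 (hs0 s hs))
    have hne36 : 36 * s ^ 3 * ℏ ^ 2 ≠ 0 :=
      mul_ne_zero (mul_ne_zero (by norm_num) (pow_ne_zero 3 (hs0 s hs))) (pow_ne_zero 2 hℏ)
    have hder := (hnum.div hden hne).deriv
    have hder' : deriv (fun x => β x * (4 * γ x + 3 * ℏ) / (2 * ℏ * x ^ 2)) s = _ := hder
    rw [h3it, hev.deriv_eq, hder', div_eq_div_iff (pow_ne_zero 2 hne) hne36]
    push_cast
    simp only [Pi.mul_apply]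
    linear_combination ((4 * γ s + 3 * ℏ) * (36 * ℏ ^ 2 * s ^ 4)) * mβ s hs
      + (16 * ℏ ^ 2 * s ^ 4) * mγ s hs
  intro t ht
  have ht0 : t ≠ 0 := hs0 t ht
  have hb0 := hβ0 t ht
  have E4 : iteratedDeriv 4 α t =
      (-864 * t * ℏ - 576 * γ t * t + 945 * β t * ℏ ^ 3 + 2556 * β t * γ t * ℏ ^ 2
        + 2160 * β t * (γ t) ^ 2 * ℏ + 576 * β t * (γ t) ^ 3 + 2880 * (β t) ^ 2 * δ t * ℏ
        + 2880 * (β t) ^ 2 * γ t * δ t + 544 * (β t) ^ 4 * ℏ + 1984 * (β t) ^ 4 * γ t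
        - 400 * α t * (β t) ^ 3 * ℏ - 832 * α t * (β t) ^ 3 * γ t
        + 64 * (α t) ^ 2 * (β t) ^ 2 * ℏ + 64 * (α t) ^ 2 * (β t) ^ 2 * γ t)
        / (72 * t ^ 4 * ℏ ^ 3) := by
    have h4it : iteratedDeriv 4 α = deriv (iteratedDeriv 3 α) := by
      rw [show (4 : ℕ) = 3 + 1 from rfl, iteratedDeriv_succ]
    have hev : iteratedDeriv 3 α =ᶠ[nhds t]
        fun x => (72 * x - 4 * (α x) ^ 2 * (β x) ^ 2 + 16 * α x * (β x) ^ 3 - 16 * (β x) ^ 4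
          - 180 * (β x) ^ 2 * δ x - 144 * β x * (γ x) ^ 2 - 288 * β x * γ x * ℏ
          - 135 * β x * ℏ ^ 2) / (36 * x ^ 3 * ℏ ^ 2) := by
      filter_upwards [hU.mem_nhds ht] with x hx using E3 x hx
    have Ha := (dAa t ht).hasDerivAt
    have Hb := (dAb t ht).hasDerivAt
    have Hc := (dAc t ht).hasDerivAt
    have Hd := (dAd t ht).hasDerivAt
    have hnum := (((((((((hasDerivAt_id t).const_mul (72 : ℂ)).sub
        (((Ha.pow 2).const_mul (4 : ℂ)).mul (Hb.pow 2))).add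
        ((Ha.const_mul (16 : ℂ)).mul (Hb.pow 3))).sub
        ((Hb.pow 4).const_mul (16 : ℂ))).sub
        (((Hb.pow 2).const_mul (180 : ℂ)).mul Hd)).sub
        ((Hb.const_mul (144 : ℂ)).mul (Hc.pow 2))).sub
        (((Hb.const_mul (288 : ℂ)).mul Hc).mul_const ℏ)).sub
        ((Hb.const_mul (135 : ℂ)).mul_const (ℏ ^ 2)))
    have hden := ((hasDerivAt_pow 3 t).const_mul (36 : ℂ)).mul_const (ℏ ^ 2)
    have hneD : 36 * t ^ 3 * ℏ ^ 2 ≠ 0 :=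
      mul_ne_zero (mul_ne_zero (by norm_num) (pow_ne_zero 3 ht0)) (pow_ne_zero 2 hℏ)
    have hneD4 : 72 * t ^ 4 * ℏ ^ 3 ≠ 0 :=
      mul_ne_zero (mul_ne_zero (by norm_num) (pow_ne_zero 4 ht0)) (pow_ne_zero 3 hℏ)
    have hder := (hnum.div hden hneD).deriv
    have hder' : deriv (fun x => (72 * x - 4 * (α x) ^ 2 * (β x) ^ 2 + 16 * α x * (β x) ^ 3
        - 16 * (β x) ^ 4 - 180 * (β x) ^ 2 * δ x - 144 * β x * (γ x) ^ 2 - 288 * β x * γ x * ℏ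
        - 135 * β x * ℏ ^ 2) / (36 * x ^ 3 * ℏ ^ 2)) t = _ := hder
    rw [h4it, hev.deriv_eq, hder', div_eq_div_iff (pow_ne_zero 2 hneD) hneD4]
    push_cast
    simp only [id_eq, Pi.mul_apply, Pi.pow_apply, Pi.sub_apply, Pi.add_apply, Pi.neg_apply]
    linear_combination ((16 * (β t) ^ 3 - 8 * α t * (β t) ^ 2) * (2592 * t ^ 6 * ℏ ^ 5)) * mα t ht
      + ((-8 * (α t) ^ 2 * β t + 48 * α t * (β t) ^ 2 - 64 * (β t) ^ 3 - 360 * β t * δ t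
          - 144 * (γ t) ^ 2 - 288 * γ t * ℏ - 135 * ℏ ^ 2) * (1296 * t ^ 6 * ℏ ^ 4)) * mβ t ht
      + (-(γ t + ℏ) * (41472 * t ^ 6 * ℏ ^ 4)) * mγ t ht
      + (-10368 * (β t) ^ 2 * t ^ 6 * ℏ ^ 4) * mδ t ht
  have hbe : β t = -t * deriv α t := by linear_combination mα t ht
  rw [E4, E3 t ht, E2 t ht, hbe]
  have hA : deriv α t ≠ 0 := hα' t ht
  simp only [div_eq_mul_inv, mul_inv, ← inv_pow]
  linear_combination (-14 * (deriv α t) ^ 4 + -6 * ℏ * (deriv α t) * t⁻¹ ^ 3 * ℏ⁻¹ * (deriv α t)⁻¹ + 16 * ℏ ^ 2 * t⁻¹ ^ 3 * ℏ⁻¹ ^ 2 + -12 * ℏ ^ 3 * t⁻¹ ^ 3 * ℏ⁻¹ ^ 3 + (-135/8) * ℏ ^ 3 * (deriv α t) * t⁻¹ ^ 3 * ℏ⁻¹ + 30 * ℏ ^ 4 * (deriv α t) * t⁻¹ ^ 3 * ℏ⁻¹ ^ 2 + (-105/8) * ℏ ^ 5 * (deriv α t) * t⁻¹ ^ 3 *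 ℏ⁻¹ ^ 3 + (-32/9) * t * (deriv α t) ^ 4 * t⁻¹ + (-94/9) * t * ℏ * (deriv α t) ^ 4 * t⁻¹ * ℏ⁻¹ + 12 * t * ℏ ^ 3 * (deriv α t) * t⁻¹ ^ 4 * ℏ⁻¹ ^ 3 * (deriv α t)⁻¹ + (-135/8) * t * ℏ ^ 4 * (deriv α t) ^ 2 * t⁻¹ ^ 4 * ℏ⁻¹ ^ 2 * (deriv α t)⁻¹ + (45/2) * t * ℏ ^ 5 * (deriv α t) ^ 2 * t⁻¹ ^ 4 * ℏ⁻¹ ^ 3 * (deriv α t)⁻¹ + (-32/9) * t ^ 2 * ℏ * (deriv α t) ^ 4 * t⁻¹ ^ 2 * ℏ⁻¹ + (68/9) * t ^ 2 * ℏ ^ 2 * (deriv α t) ^ 4 * t⁻¹ ^ 2 * ℏ⁻¹ ^ 2 + (-81/8) * t ^ 2 * ℏ ^ 5 * (deriv α t) ^ 3 * t⁻¹ ^ 5 * ℏ⁻¹ ^ 3 * (deriv α t)⁻¹ ^ 2 + (-32/9) * t ^ 3 * ℏ ^ 2 * (deriv α t) ^ 4 * t⁻¹ ^ 3 * ℏ⁻¹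 ^ 2 + (68/9) * t ^ 3 * ℏ ^ 3 * (deriv α t) ^ 4 * t⁻¹ ^ 3 * ℏ⁻¹ ^ 3 + (-8/3) * t ^ 4 * ℏ ^ 3 * (deriv α t) ^ 5 * t⁻¹ ^ 4 * ℏ⁻¹ ^ 3 * (deriv α t)⁻¹ + -40 * (δ t) * ℏ * (deriv α t) ^ 2 * t⁻¹ ^ 2 * ℏ⁻¹ + 40 * (δ t) * ℏ ^ 2 * (deriv α t) ^ 2 * t⁻¹ ^ 2 * ℏ⁻¹ ^ 2 + -40 * (δ t) * t * ℏ ^ 2 * (deriv α t) ^ 2 * t⁻¹ ^ 3 * ℏ⁻¹ ^ 2 + 40 * (δ t) * t * ℏ ^ 3 * (deriv α t) ^ 2 * t⁻¹ ^ 3 * ℏ⁻¹ ^ 3 + -30 * (δ t) * t ^ 2 * ℏ ^ 3 * (deriv α t) ^ 3 * t⁻¹ ^ 4 * ℏ⁻¹ ^ 3 * (deriv α t)⁻¹ + -8 * (γ t) * (deriv α t) * t⁻¹ ^ 3 * ℏ⁻¹ * (deriv α t)⁻¹ + 16 * (γ t) * ℏ * t⁻¹ ^ 3 * ℏ⁻¹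 ^ 2 + -8 * (γ t) * ℏ ^ 2 * t⁻¹ ^ 3 * ℏ⁻¹ ^ 3 + (-117/2) * (γ t) * ℏ ^ 2 * (deriv α t) * t⁻¹ ^ 3 * ℏ⁻¹ + 94 * (γ t) * ℏ ^ 3 * (deriv α t) * t⁻¹ ^ 3 * ℏ⁻¹ ^ 2 + (-71/2) * (γ t) * ℏ ^ 4 * (deriv α t) * t⁻¹ ^ 3 * ℏ⁻¹ ^ 3 + 16 * (γ t) * t * ℏ ^ 2 * (deriv α t) * t⁻¹ ^ 4 * ℏ⁻¹ ^ 3 * (deriv α t)⁻¹ + (-117/2) * (γ t) * t * ℏ ^ 3 * (deriv α t) ^ 2 * t⁻¹ ^ 4 * ℏ⁻¹ ^ 2 * (deriv α t)⁻¹ + 78 * (γ t) * t * ℏ ^ 4 * (deriv α t) ^ 2 * t⁻¹ ^ 4 * ℏ⁻¹ ^ 3 * (deriv α t)⁻¹ + (-32/9) * (γ t) * t ^ 2 * (deriv α t) ^ 4 * t⁻¹ ^ 2 * ℏ⁻¹ + (248/9) * (γ t) * t ^ 2 * ℏ * (deriv α t) ^ 4 * t⁻¹ ^ 2 * ℏ⁻¹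 ^ 2 + (-81/2) * (γ t) * t ^ 2 * ℏ ^ 4 * (deriv α t) ^ 3 * t⁻¹ ^ 5 * ℏ⁻¹ ^ 3 * (deriv α t)⁻¹ ^ 2 + (-32/9) * (γ t) * t ^ 3 * ℏ * (deriv α t) ^ 4 * t⁻¹ ^ 3 * ℏ⁻¹ ^ 2 + (248/9) * (γ t) * t ^ 3 * ℏ ^ 2 * (deriv α t) ^ 4 * t⁻¹ ^ 3 * ℏ⁻¹ ^ 3 + (-32/9) * (γ t) * t ^ 4 * ℏ ^ 2 * (deriv α t) ^ 5 * t⁻¹ ^ 4 * ℏ⁻¹ ^ 3 * (deriv α t)⁻¹ + -40 * (γ t) * (δ t) * (deriv α t) ^ 2 * t⁻¹ ^ 2 * ℏ⁻¹ + 40 * (γ t) * (δ t) * ℏ * (deriv α t) ^ 2 * t⁻¹ ^ 2 * ℏ⁻¹ ^ 2 + -40 * (γ t) * (δ t) * t * ℏ * (deriv α t) ^ 2 * t⁻¹ ^ 3 * ℏ⁻¹ ^ 2 + 40 * (γ t) * (δ t) * t * ℏ ^ 2 * (deriv α t) ^ 2 * t⁻¹ ^ 3 * ℏ⁻¹ ^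 3 + -40 * (γ t) * (δ t) * t ^ 2 * ℏ ^ 2 * (deriv α t) ^ 3 * t⁻¹ ^ 4 * ℏ⁻¹ ^ 3 * (deriv α t)⁻¹ + -66 * (γ t) ^ 2 * ℏ * (deriv α t) * t⁻¹ ^ 3 * ℏ⁻¹ + 96 * (γ t) ^ 2 * ℏ ^ 2 * (deriv α t) * t⁻¹ ^ 3 * ℏ⁻¹ ^ 2 + -30 * (γ t) ^ 2 * ℏ ^ 3 * (deriv α t) * t⁻¹ ^ 3 * ℏ⁻¹ ^ 3 + -66 * (γ t) ^ 2 * t * ℏ ^ 2 * (deriv α t) ^ 2 * t⁻¹ ^ 4 * ℏ⁻¹ ^ 2 * (deriv α t)⁻¹ + 88 * (γ t) ^ 2 * t * ℏ ^ 3 * (deriv α t) ^ 2 * t⁻¹ ^ 4 * ℏ⁻¹ ^ 3 * (deriv α t)⁻¹ + -54 * (γ t) ^ 2 * t ^ 2 * ℏ ^ 3 * (deriv α t) ^ 3 * t⁻¹ ^ 5 * ℏ⁻¹ ^ 3 * (deriv α t)⁻¹ ^ 2 + -24 * (γ t) ^ 3 * (deriv α t) * t⁻¹ ^ 3 * ℏ⁻¹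 + 32 * (γ t) ^ 3 * ℏ * (deriv α t) * t⁻¹ ^ 3 * ℏ⁻¹ ^ 2 + -8 * (γ t) ^ 3 * ℏ ^ 2 * (deriv α t) * t⁻¹ ^ 3 * ℏ⁻¹ ^ 3 + -24 * (γ t) ^ 3 * t * ℏ * (deriv α t) ^ 2 * t⁻¹ ^ 4 * ℏ⁻¹ ^ 2 * (deriv α t)⁻¹ + 32 * (γ t) ^ 3 * t * ℏ ^ 2 * (deriv α t) ^ 2 * t⁻¹ ^ 4 * ℏ⁻¹ ^ 3 * (deriv α t)⁻¹ + -24 * (γ t) ^ 3 * t ^ 2 * ℏ ^ 2 * (deriv α t) ^ 3 * t⁻¹ ^ 5 * ℏ⁻¹ ^ 3 * (deriv α t)⁻¹ ^ 2 + (-32/9) * (α t) * (deriv α t) ^ 3 * t⁻¹ + (-4/9) * (α t) * ℏ * (deriv α t) ^ 3 * t⁻¹ * ℏ⁻¹ + (-32/9) * (α t) * t * ℏ * (deriv α t) ^ 3 * t⁻¹ ^ 2 * ℏ⁻¹ + (50/9) * (α t) * t * ℏ ^ 2 * (deriv α t) ^ 3 * t⁻¹ ^ 2 * ℏ⁻¹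 ^ 2 + (-32/9) * (α t) * t ^ 2 * ℏ ^ 2 * (deriv α t) ^ 3 * t⁻¹ ^ 3 * ℏ⁻¹ ^ 2 + (50/9) * (α t) * t ^ 2 * ℏ ^ 3 * (deriv α t) ^ 3 * t⁻¹ ^ 3 * ℏ⁻¹ ^ 3 + (-8/3) * (α t) * t ^ 3 * ℏ ^ 3 * (deriv α t) ^ 4 * t⁻¹ ^ 4 * ℏ⁻¹ ^ 3 * (deriv α t)⁻¹ + (-32/9) * (α t) * (γ t) * t * (deriv α t) ^ 3 * t⁻¹ ^ 2 * ℏ⁻¹ + (104/9) * (α t) * (γ t) * t * ℏ * (deriv α t) ^ 3 * t⁻¹ ^ 2 * ℏ⁻¹ ^ 2 + (-32/9) * (α t) * (γ t) * t ^ 2 * ℏ * (deriv α t) ^ 3 * t⁻¹ ^ 3 * ℏ⁻¹ ^ 2 + (104/9) * (α t) * (γ t) * t ^ 2 * ℏ ^ 2 * (deriv α t) ^ 3 * t⁻¹ ^ 3 * ℏ⁻¹ ^ 3 + (-32/9) * (α t) * (γ t) * t ^ 3 * ℏ ^ 2 * (deriv α t) ^ 4 * t⁻¹ ^ 4 * ℏ⁻¹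 ^ 3 * (deriv α t)⁻¹ + (-8/9) * (α t) ^ 2 * ℏ * (deriv α t) ^ 2 * t⁻¹ ^ 2 * ℏ⁻¹ + (8/9) * (α t) ^ 2 * ℏ ^ 2 * (deriv α t) ^ 2 * t⁻¹ ^ 2 * ℏ⁻¹ ^ 2 + (-8/9) * (α t) ^ 2 * t * ℏ ^ 2 * (deriv α t) ^ 2 * t⁻¹ ^ 3 * ℏ⁻¹ ^ 2 + (8/9) * (α t) ^ 2 * t * ℏ ^ 3 * (deriv α t) ^ 2 * t⁻¹ ^ 3 * ℏ⁻¹ ^ 3 + (-2/3) * (α t) ^ 2 * t ^ 2 * ℏ ^ 3 * (deriv α t) ^ 3 * t⁻¹ ^ 4 * ℏ⁻¹ ^ 3 * (deriv α t)⁻¹ + (-8/9) * (α t) ^ 2 * (γ t) * (deriv α t) ^ 2 * t⁻¹ ^ 2 * ℏ⁻¹ + (8/9) * (α t) ^ 2 * (γ t) * ℏ * (deriv α t) ^ 2 * t⁻¹ ^ 2 * ℏ⁻¹ ^ 2 + (-8/9) * (α t) ^ 2 * (γ t) * t * ℏ * (deriv α t) ^ 2 * t⁻¹ ^ 3 * ℏ⁻¹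 ^ 2 + (8/9) * (α t) ^ 2 * (γ t) * t * ℏ ^ 2 * (deriv α t) ^ 2 * t⁻¹ ^ 3 * ℏ⁻¹ ^ 3 + (-8/9) * (α t) ^ 2 * (γ t) * t ^ 2 * ℏ ^ 2 * (deriv α t) ^ 3 * t⁻¹ ^ 4 * ℏ⁻¹ ^ 3 * (deriv α t)⁻¹) * (mul_inv_cancel₀ ht0)
      + (4 * t⁻¹ ^ 3 + -6 * (deriv α t) * t⁻¹ ^ 3 * (deriv α t)⁻¹ + 4 * ℏ * t⁻¹ ^ 3 * ℏ⁻¹ + -12 * ℏ ^ 2 * t⁻¹ ^ 3 * ℏ⁻¹ ^ 2 + (135/8) * ℏ ^ 3 * (deriv α t) * t⁻¹ ^ 3 * ℏ⁻¹ + (-105/8) * ℏ ^ 4 * (deriv α t) * t⁻¹ ^ 3 * ℏ⁻¹ ^ 2 + (-94/9) * t * (deriv α t) ^ 4 * t⁻¹ + 12 * t * ℏ ^ 2 * (deriv α t) * t⁻¹ ^ 4 * ℏ⁻¹ ^ 2 * (deriv α t)⁻¹ + (-135/8) * t * ℏ ^ 3 * (deriv α t) ^ 2 * t⁻¹ ^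 4 * ℏ⁻¹ * (deriv α t)⁻¹ + (45/2) * t * ℏ ^ 4 * (deriv α t) ^ 2 * t⁻¹ ^ 4 * ℏ⁻¹ ^ 2 * (deriv α t)⁻¹ + (-32/9) * t ^ 2 * (deriv α t) ^ 4 * t⁻¹ ^ 2 + (68/9) * t ^ 2 * ℏ * (deriv α t) ^ 4 * t⁻¹ ^ 2 * ℏ⁻¹ + (-81/8) * t ^ 2 * ℏ ^ 4 * (deriv α t) ^ 3 * t⁻¹ ^ 5 * ℏ⁻¹ ^ 2 * (deriv α t)⁻¹ ^ 2 + (-32/9) * t ^ 3 * ℏ * (deriv α t) ^ 4 * t⁻¹ ^ 3 * ℏ⁻¹ + (68/9) * t ^ 3 * ℏ ^ 2 * (deriv α t) ^ 4 * t⁻¹ ^ 3 * ℏ⁻¹ ^ 2 + (-8/3) * t ^ 4 * ℏ ^ 2 * (deriv α t) ^ 5 * t⁻¹ ^ 4 * ℏ⁻¹ ^ 2 * (deriv α t)⁻¹ + 40 * (δ t) * ℏ * (deriv α t) ^ 2 * t⁻¹ ^ 2 * ℏ⁻¹ + -40 * (δ t) * t * ℏ * (deriv α t) ^ 2 * t⁻¹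 ^ 3 * ℏ⁻¹ + 40 * (δ t) * t * ℏ ^ 2 * (deriv α t) ^ 2 * t⁻¹ ^ 3 * ℏ⁻¹ ^ 2 + -30 * (δ t) * t ^ 2 * ℏ ^ 2 * (deriv α t) ^ 3 * t⁻¹ ^ 4 * ℏ⁻¹ ^ 2 * (deriv α t)⁻¹ + 8 * (γ t) * t⁻¹ ^ 3 * ℏ⁻¹ + -8 * (γ t) * ℏ * t⁻¹ ^ 3 * ℏ⁻¹ ^ 2 + (117/2) * (γ t) * ℏ ^ 2 * (deriv α t) * t⁻¹ ^ 3 * ℏ⁻¹ + (-71/2) * (γ t) * ℏ ^ 3 * (deriv α t) * t⁻¹ ^ 3 * ℏ⁻¹ ^ 2 + 16 * (γ t) * t * ℏ * (deriv α t) * t⁻¹ ^ 4 * ℏ⁻¹ ^ 2 * (deriv α t)⁻¹ + (-117/2) * (γ t) * t * ℏ ^ 2 * (deriv α t) ^ 2 * t⁻¹ ^ 4 * ℏ⁻¹ * (deriv α t)⁻¹ + 78 * (γ t) * t * ℏ ^ 3 * (deriv α t) ^ 2 * t⁻¹ ^ 4 * ℏ⁻¹ ^ 2 * (deriv α t)⁻¹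 + (248/9) * (γ t) * t ^ 2 * (deriv α t) ^ 4 * t⁻¹ ^ 2 * ℏ⁻¹ + (-81/2) * (γ t) * t ^ 2 * ℏ ^ 3 * (deriv α t) ^ 3 * t⁻¹ ^ 5 * ℏ⁻¹ ^ 2 * (deriv α t)⁻¹ ^ 2 + (-32/9) * (γ t) * t ^ 3 * (deriv α t) ^ 4 * t⁻¹ ^ 3 * ℏ⁻¹ + (248/9) * (γ t) * t ^ 3 * ℏ * (deriv α t) ^ 4 * t⁻¹ ^ 3 * ℏ⁻¹ ^ 2 + (-32/9) * (γ t) * t ^ 4 * ℏ * (deriv α t) ^ 5 * t⁻¹ ^ 4 * ℏ⁻¹ ^ 2 * (deriv α t)⁻¹ + 40 * (γ t) * (δ t) * (deriv α t) ^ 2 * t⁻¹ ^ 2 * ℏ⁻¹ + -40 * (γ t) * (δ t) * t * (deriv α t) ^ 2 * t⁻¹ ^ 3 * ℏ⁻¹ + 40 * (γ t) * (δ t) * t * ℏ * (deriv α t) ^ 2 * t⁻¹ ^ 3 * ℏ⁻¹ ^ 2 + -40 * (γ t) * (δ t) * t ^ 2 * ℏ * (deriv α t) ^ 3 * t⁻¹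 ^ 4 * ℏ⁻¹ ^ 2 * (deriv α t)⁻¹ + 66 * (γ t) ^ 2 * ℏ * (deriv α t) * t⁻¹ ^ 3 * ℏ⁻¹ + -30 * (γ t) ^ 2 * ℏ ^ 2 * (deriv α t) * t⁻¹ ^ 3 * ℏ⁻¹ ^ 2 + -66 * (γ t) ^ 2 * t * ℏ * (deriv α t) ^ 2 * t⁻¹ ^ 4 * ℏ⁻¹ * (deriv α t)⁻¹ + 88 * (γ t) ^ 2 * t * ℏ ^ 2 * (deriv α t) ^ 2 * t⁻¹ ^ 4 * ℏ⁻¹ ^ 2 * (deriv α t)⁻¹ + -54 * (γ t) ^ 2 * t ^ 2 * ℏ ^ 2 * (deriv α t) ^ 3 * t⁻¹ ^ 5 * ℏ⁻¹ ^ 2 * (deriv α t)⁻¹ ^ 2 + 24 * (γ t) ^ 3 * (deriv α t) * t⁻¹ ^ 3 * ℏ⁻¹ + -8 * (γ t) ^ 3 * ℏ * (deriv α t) * t⁻¹ ^ 3 * ℏ⁻¹ ^ 2 + -24 * (γ t) ^ 3 * t * (deriv α t) ^ 2 * t⁻¹ ^ 4 * ℏ⁻¹ * (deriv α t)⁻¹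 + 32 * (γ t) ^ 3 * t * ℏ * (deriv α t) ^ 2 * t⁻¹ ^ 4 * ℏ⁻¹ ^ 2 * (deriv α t)⁻¹ + -24 * (γ t) ^ 3 * t ^ 2 * ℏ * (deriv α t) ^ 3 * t⁻¹ ^ 5 * ℏ⁻¹ ^ 2 * (deriv α t)⁻¹ ^ 2 + (-4/9) * (α t) * (deriv α t) ^ 3 * t⁻¹ + (-32/9) * (α t) * t * (deriv α t) ^ 3 * t⁻¹ ^ 2 + (50/9) * (α t) * t * ℏ * (deriv α t) ^ 3 * t⁻¹ ^ 2 * ℏ⁻¹ + (-32/9) * (α t) * t ^ 2 * ℏ * (deriv α t) ^ 3 * t⁻¹ ^ 3 * ℏ⁻¹ + (50/9) * (α t) * t ^ 2 * ℏ ^ 2 * (deriv α t) ^ 3 * t⁻¹ ^ 3 * ℏ⁻¹ ^ 2 + (-8/3) * (α t) * t ^ 3 * ℏ ^ 2 * (deriv α t) ^ 4 * t⁻¹ ^ 4 * ℏ⁻¹ ^ 2 * (deriv α t)⁻¹ + (104/9) * (α t) * (γ t) * t * (deriv α t) ^ 3 * t⁻¹ ^ 2 * ℏ⁻¹ + (-32/9)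 * (α t) * (γ t) * t ^ 2 * (deriv α t) ^ 3 * t⁻¹ ^ 3 * ℏ⁻¹ + (104/9) * (α t) * (γ t) * t ^ 2 * ℏ * (deriv α t) ^ 3 * t⁻¹ ^ 3 * ℏ⁻¹ ^ 2 + (-32/9) * (α t) * (γ t) * t ^ 3 * ℏ * (deriv α t) ^ 4 * t⁻¹ ^ 4 * ℏ⁻¹ ^ 2 * (deriv α t)⁻¹ + (8/9) * (α t) ^ 2 * ℏ * (deriv α t) ^ 2 * t⁻¹ ^ 2 * ℏ⁻¹ + (-8/9) * (α t) ^ 2 * t * ℏ * (deriv α t) ^ 2 * t⁻¹ ^ 3 * ℏ⁻¹ + (8/9) * (α t) ^ 2 * t * ℏ ^ 2 * (deriv α t) ^ 2 * t⁻¹ ^ 3 * ℏ⁻¹ ^ 2 + (-2/3) * (α t) ^ 2 * t ^ 2 * ℏ ^ 2 * (deriv α t) ^ 3 * t⁻¹ ^ 4 * ℏ⁻¹ ^ 2 * (deriv α t)⁻¹ + (8/9) * (α t) ^ 2 * (γ t) * (deriv α t) ^ 2 * t⁻¹ ^ 2 * ℏ⁻¹ + (-8/9) * (α t) ^ 2 *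 (γ t) * t * (deriv α t) ^ 2 * t⁻¹ ^ 3 * ℏ⁻¹ + (8/9) * (α t) ^ 2 * (γ t) * t * ℏ * (deriv α t) ^ 2 * t⁻¹ ^ 3 * ℏ⁻¹ ^ 2 + (-8/9) * (α t) ^ 2 * (γ t) * t ^ 2 * ℏ * (deriv α t) ^ 3 * t⁻¹ ^ 4 * ℏ⁻¹ ^ 2 * (deriv α t)⁻¹) * (mul_inv_cancel₀ hℏ)
      + (-6 * t⁻¹ ^ 3 + 12 * t * ℏ ^ 2 * t⁻¹ ^ 4 * ℏ⁻¹ ^ 2 + (-135/8) * t * ℏ ^ 3 * (deriv α t) * t⁻¹ ^ 4 * ℏ⁻¹ + (45/2) * t * ℏ ^ 4 * (deriv α t) * t⁻¹ ^ 4 * ℏ⁻¹ ^ 2 + (-81/8) * t ^ 2 * ℏ ^ 4 * (deriv α t) ^ 2 * t⁻¹ ^ 5 * ℏ⁻¹ ^ 2 * (deriv α t)⁻¹ + (-8/3) * t ^ 4 * ℏ ^ 2 * (deriv α t) ^ 4 * t⁻¹ ^ 4 * ℏ⁻¹ ^ 2 + -30 * (δ t) * t ^ 2 * ℏ ^ 2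 * (deriv α t) ^ 2 * t⁻¹ ^ 4 * ℏ⁻¹ ^ 2 + -8 * (γ t) * t⁻¹ ^ 3 * ℏ⁻¹ + 16 * (γ t) * t * ℏ * t⁻¹ ^ 4 * ℏ⁻¹ ^ 2 + (-117/2) * (γ t) * t * ℏ ^ 2 * (deriv α t) * t⁻¹ ^ 4 * ℏ⁻¹ + 78 * (γ t) * t * ℏ ^ 3 * (deriv α t) * t⁻¹ ^ 4 * ℏ⁻¹ ^ 2 + (-81/2) * (γ t) * t ^ 2 * ℏ ^ 3 * (deriv α t) ^ 2 * t⁻¹ ^ 5 * ℏ⁻¹ ^ 2 * (deriv α t)⁻¹ + (-32/9) * (γ t) * t ^ 4 * ℏ * (deriv α t) ^ 4 * t⁻¹ ^ 4 * ℏ⁻¹ ^ 2 + -40 * (γ t) * (δ t) * t ^ 2 * ℏ * (deriv α t) ^ 2 * t⁻¹ ^ 4 * ℏ⁻¹ ^ 2 + -66 * (γ t) ^ 2 * t * ℏ * (deriv α t) * t⁻¹ ^ 4 * ℏ⁻¹ + 88 * (γ t) ^ 2 * t * ℏ ^ 2 * (deriv α t) * t⁻¹ ^ 4 * ℏ⁻¹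 ^ 2 + -54 * (γ t) ^ 2 * t ^ 2 * ℏ ^ 2 * (deriv α t) ^ 2 * t⁻¹ ^ 5 * ℏ⁻¹ ^ 2 * (deriv α t)⁻¹ + -24 * (γ t) ^ 3 * t * (deriv α t) * t⁻¹ ^ 4 * ℏ⁻¹ + 32 * (γ t) ^ 3 * t * ℏ * (deriv α t) * t⁻¹ ^ 4 * ℏ⁻¹ ^ 2 + -24 * (γ t) ^ 3 * t ^ 2 * ℏ * (deriv α t) ^ 2 * t⁻¹ ^ 5 * ℏ⁻¹ ^ 2 * (deriv α t)⁻¹ + (-8/3) * (α t) * t ^ 3 * ℏ ^ 2 * (deriv α t) ^ 3 * t⁻¹ ^ 4 * ℏ⁻¹ ^ 2 + (-32/9) * (α t) * (γ t) * t ^ 3 * ℏ * (deriv α t) ^ 3 * t⁻¹ ^ 4 * ℏ⁻¹ ^ 2 + (-2/3) * (α t) ^ 2 * t ^ 2 * ℏ ^ 2 * (deriv α t) ^ 2 * t⁻¹ ^ 4 * ℏ⁻¹ ^ 2 + (-8/9) * (α t) ^ 2 * (γ t) * t ^ 2 * ℏ * (deriv α t) ^ 2 * t⁻¹ ^ 4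 * ℏ⁻¹ ^ 2) * (mul_inv_cancel₀ hA)
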